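/- Let (G,T) be a bipartite graft with color classes A and B, let F be a minimum join, and let X ⊆ A be a maximal bipartitic extreme set. Then every vertex of C_X belongs to B, is not in T, and is incident with no edge that belongs to any minimum join of (G,T) (i.e., every vertex of C_X is a trivial vertex from B). -/

import Mathlib

open scoped Classical

variable {V : Type*}

/-- The `F`-weight of a walk: number of edges outside `F` minus number of edges in `F`. -/
noncomputable def walkWeight {G : SimpleGraph V} (F : Set (Sym2 V)) {x y : V}
    (p : G.Walk x y) : ℤ :=
  ((p.edges.filter fun e => e ∉ F).length : ℤ) -
    ((p.edges.filter fun e => e ∈ F).length : ℤ)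

/-- The `F`-distance between `x` and `y`: the minimum `F`-weight of a path between them. -/
noncomputable def distF (G : SimpleGraph V) (F : Set (Sym2 V)) (x y : V) : ℤ :=
  sInf {w : ℤ | ∃ p : G.Walk x y, p.IsPath ∧ walkWeight F p = w}

/-- `F` is a join of the graft `(G, T)`. -/
def IsJoin (G : SimpleGraph V) (T : Set V) (F : Set (Sym2 V)) : Prop :=
  F ⊆ G.edgeSet ∧ ∀ v : V, v ∈ T ↔ Odd {e ∈ F | v ∈ e}.ncard

/-- `F` is a minimum join of the graft `(G, T)`. -/
def IsMinJoin (G : SimpleGraph V) (T : Set V) (F : Set (Sym2 V)) : Prop :=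
  IsJoin G T F ∧ ∀ F' : Set (Sym2 V), IsJoin G T F' → F.ncard ≤ F'.ncard

/-- `(G, T)` is a graft: every connected component contains an even number of vertices of `T`. -/
def IsGraft (G : SimpleGraph V) (T : Set V) : Prop :=
  ∀ v : V, Even {u | u ∈ T ∧ G.Reachable v u}.ncard

/-- `X` is an extreme set: `d_F(x, y) ≥ 0` for all `x, y ∈ X`. -/
def IsExtremeSet (G : SimpleGraph V) (F : Set (Sym2 V)) (X : Set V) : Prop :=
  ∀ x ∈ X, ∀ y ∈ X, 0 ≤ distF G F x y

/-- `G` is bipartite with vertex set `Vset` and color classes `A`, `B`. -/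
def IsBipartitionOn (G : SimpleGraph V) (Vset A B : Set V) : Prop :=
  A ∪ B = Vset ∧ Disjoint A B ∧
    ∀ v w : V, G.Adj v w → (v ∈ A ∧ w ∈ B) ∨ (v ∈ B ∧ w ∈ A)

/-- `X` is a maximal bipartitic extreme set with respect to color classes `A`, `B`. -/
def MaxBipExtreme (G : SimpleGraph V) (F : Set (Sym2 V)) (A B X : Set V) : Prop :=
  IsExtremeSet G F X ∧ (X ⊆ A ∨ X ⊆ B) ∧
    ∀ X' : Set V, IsExtremeSet G F X' → (X' ⊆ A ∨ X' ⊆ B) → X ⊆ X' → X' = X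

/-- `D_X`: the vertices of `Vset ∖ X` at negative `F`-distance from `X`. -/
def Dset (G : SimpleGraph V) (F : Set (Sym2 V)) (Vset X : Set V) : Set V :=
  {y | y ∈ Vset ∧ y ∉ X ∧ ∃ x ∈ X, distF G F x y < 0}

/-- `C_X = Vset ∖ X ∖ D_X`. -/
def Cset (G : SimpleGraph V) (F : Set (Sym2 V)) (Vset X : Set V) : Set V :=
  (Vset \ X) \ Dset G F Vset X

/-- `min_{x ∈ X} d_F(x, y)`. -/
noncomputable def minDistX (G : SimpleGraph V) (F : Set (Sym2 V)) (X : Set V) (y : V) : ℤ :=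
  sInf {d : ℤ | ∃ x ∈ X, distF G F x y = d}

/-- The graph `G − S` obtained by deleting the vertices of `S`. -/
def gDelete (G : SimpleGraph V) (S : Set V) : SimpleGraph V where
  Adj v w := G.Adj v w ∧ v ∉ S ∧ w ∉ S
  symm := ⟨fun v w ⟨h, hv, hw⟩ => ⟨h.symm, hw, hv⟩⟩
  loopless := ⟨fun v h => G.loopless.irrefl v h.1⟩

/-- The subgraph of `G` induced by `S`. -/
def gRestrict (G : SimpleGraph V) (S : Set V) : SimpleGraph V where
  Adj v w := G.Adj v w ∧ v ∈ S ∧ w ∈ S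
  symm := ⟨fun v w ⟨h, hv, hw⟩ => ⟨h.symm, hw, hv⟩⟩
  loopless := ⟨fun v h => G.loopless.irrefl v h.1⟩

/-- `C` is (the vertex set of) a connected component of `G − X`. -/
def IsCompOf (G : SimpleGraph V) (X C : Set V) : Prop :=
  ∃ v, v ∉ X ∧ C = {u | (gDelete G X).Reachable v u}

/-- `δ_G(C)`: the edges of `G` with exactly one end in `C`. -/
def edgeBoundary (G : SimpleGraph V) (C : Set V) : Set (Sym2 V) :=
  {e | e ∈ G.edgeSet ∧ ∃ u v : V, e = s(u, v) ∧ u ∈ C ∧ v ∉ C}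

/-- `X` is an `F`-combic set of the graft `(G, T)`. -/
def IsCombic (G : SimpleGraph V) (T : Set V) (F : Set (Sym2 V)) (X : Set V) : Prop :=
  (∀ u v : V, s(u, v) ∈ F → ¬(u ∈ X ∧ v ∈ X)) ∧
  (∀ C : Set V, IsCompOf G X C → Odd (C ∩ T).ncard →
      (edgeBoundary G C ∩ F).ncard = 1) ∧
  (∀ C : Set V, IsCompOf G X C → Even (C ∩ T).ncard →
      edgeBoundary G C ∩ F = ∅)

/-- The rootlization of `G` by the mount `X`, root `r` and attachment `s`. -/
def rootlize (G : SimpleGraph V) (X : Set V) (r s : V) : SimpleGraph V :=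
  SimpleGraph.fromRel fun v w => G.Adj v w ∨ (v = r ∧ w = s) ∨ (v = s ∧ w ∈ X)

/-- The initial component of `r`: the connected component of `r` in the subgraph
induced by the vertices at nonpositive `F`-distance from `r`. -/
def initComp (G : SimpleGraph V) (F : Set (Sym2 V)) (r : V) : Set V :=
  {x | (gRestrict G {y | distF G F r y ≤ 0}).Reachable r x}

section Aux

open SimpleGraph

variable {G : SimpleGraph V} {F F' : Set (Sym2 V)}

lemma list_filter_split (F : Set (Sym2 V)) (l : List (Sym2 V)) :
    ((l.filter fun e => e ∉ F).length) + ((l.filter fun e => e ∈ F).length) = l.length := by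
  have h := List.length_eq_length_filter_add (l := l) (fun e => decide (e ∈ F))
  have h2 : (l.filter fun e => e ∉ F) = l.filter (fun e => !decide (e ∈ F)) := by
    congr 1
    funext e
    simp [decide_not]
  rw [h2]
  omega

lemma walkWeight_nil {v : V} : walkWeight F (Walk.nil : G.Walk v v) = 0 := by
  simp [walkWeight]

lemma walkWeight_eq_length_sub {x y : V} (p : G.Walk x y) :
    walkWeight F p = (p.length : ℤ) - 2 * ((p.edges.filter fun e => e ∈ F).length : ℤ) := by
  have h := list_filter_split F p.edges
  rw [Walk.length_edges] at h
  unfold walkWeight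
  omega

lemma walkWeight_ge {x y : V} (p : G.Walk x y) :
    -(p.length : ℤ) ≤ walkWeight F p := by
  have h := walkWeight_eq_length_sub (F := F) p
  have h2 : (p.edges.filter fun e => e ∈ F).length ≤ p.edges.length :=
    List.length_filter_le _ _
  rw [Walk.length_edges] at h2
  omega

lemma walkWeight_cons {a b c : V} (h : G.Adj a b) (p : G.Walk b c) :
    walkWeight F (Walk.cons h p) =
      (if s(a, b) ∈ F then (-1 : ℤ) else 1) + walkWeight F p := by
  unfold walkWeight
  by_cases hm : s(a, b) ∈ F <;>
    simp [Walk.edges_cons, List.filter_cons, hm] <;> push_cast <;> ring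

lemma walkWeight_append {a b c : V} (p : G.Walk a b) (q : G.Walk b c) :
    walkWeight F (p.append q) = walkWeight F p + walkWeight F q := by
  unfold walkWeight
  simp [Walk.edges_append, List.filter_append]
  push_cast
  ring

lemma walkWeight_concat {a b c : V} (p : G.Walk a b) (h : G.Adj b c) :
    walkWeight F (p.concat h) = walkWeight F p + (if s(b, c) ∈ F then (-1 : ℤ) else 1) := by
  rw [Walk.concat_eq_append, walkWeight_append, walkWeight_cons, walkWeight_nil]
  ring

lemma walkWeight_reverse {a b : V} (p : G.Walk a b) :
    walkWeight F p.reverse = walkWeight F p := by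
  unfold walkWeight
  simp [Walk.edges_reverse, List.filter_reverse]

lemma bddBelow_weights [Fintype V] (G : SimpleGraph V) (F : Set (Sym2 V)) (x y : V) :
    BddBelow {w : ℤ | ∃ p : G.Walk x y, p.IsPath ∧ walkWeight F p = w} := by
  refine ⟨-(Fintype.card V : ℤ), ?_⟩
  rintro w ⟨p, hp, rfl⟩
  have h1 := walkWeight_ge (F := F) p
  have h2 := hp.length_lt
  omega

lemma distF_le_walkWeight [Fintype V] {x y : V} (p : G.Walk x y) (hp : p.IsPath) :
    distF G F x y ≤ walkWeight F p :=
  csInf_le (bddBelow_weights G F x y) ⟨p, hp, rfl⟩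

lemma distF_witness [Fintype V] {x y : V} (h : distF G F x y < 0) :
    ∃ p : G.Walk x y, p.IsPath ∧ walkWeight F p = distF G F x y := by
  have hne : {w : ℤ | ∃ p : G.Walk x y, p.IsPath ∧ walkWeight F p = w}.Nonempty := by
    by_contra hemp
    rw [Set.not_nonempty_iff_eq_empty] at hemp
    unfold distF at h
    rw [hemp, Int.csInf_empty] at h
    omega
  exact Int.csInf_mem hne (bddBelow_weights G F x y)

lemma distF_self (G : SimpleGraph V) (F : Set (Sym2 V)) (v : V) : distF G F v v = 0 := by
  have : {w : ℤ | ∃ p : G.Walk v v, p.IsPath ∧ walkWeight F p = w} = {0} := by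
    ext w
    constructor
    · rintro ⟨p, hp, rfl⟩
      rw [(Walk.isPath_iff_eq_nil (p := p)).mp hp]
      simp [walkWeight_nil]
    · rintro rfl
      exact ⟨Walk.nil, Walk.IsPath.nil, walkWeight_nil⟩
  rw [distF, this, csInf_singleton]

lemma distF_symm (G : SimpleGraph V) (F : Set (Sym2 V)) (x y : V) :
    distF G F x y = distF G F y x := by
  unfold distF
  congr 1
  ext w
  constructor
  · rintro ⟨p, hp, rfl⟩
    exact ⟨p.reverse, hp.reverse, walkWeight_reverse p⟩
  · rintro ⟨p, hp, rfl⟩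
    exact ⟨p.reverse, hp.reverse, walkWeight_reverse p⟩

lemma bip_cases {A B : Set V} (hbip : IsBipartitionOn G Set.univ A B) (z : V) :
    z ∈ A ∨ z ∈ B := by
  have : z ∈ A ∪ B := by rw [hbip.1]; exact Set.mem_univ z
  exact this

lemma adj_A_not_iff {A B : Set V} (hbip : IsBipartitionOn G Set.univ A B) {a c : V}
    (h : G.Adj a c) : a ∈ A ↔ c ∉ A := by
  obtain ⟨hU, hD, hAdj⟩ := hbip
  rcases hAdj a c h with ⟨ha, hc⟩ | ⟨ha, hc⟩
  · exact ⟨fun _ hcA => (Set.disjoint_left.mp hD hcA) hc, fun _ => ha⟩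
  · exact ⟨fun haA => ((Set.disjoint_left.mp hD haA) ha).elim, fun hcA' => (hcA' hc).elim⟩

lemma walk_length_parity {A B : Set V} (hbip : IsBipartitionOn G Set.univ A B)
    {a b : V} (p : G.Walk a b) : Even p.length ↔ (a ∈ A ↔ b ∈ A) := by
  induction p with
  | nil => simp
  | @cons a c b h q ih =>
    have hac := adj_A_not_iff hbip h
    rw [Walk.length_cons, Nat.even_add_one, ih]
    tauto

lemma walkWeight_even_iff {x y : V} (p : G.Walk x y) :
    Even (walkWeight F p) ↔ Even p.length := by
  have h := walkWeight_eq_length_sub (F := F) p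
  constructor
  · intro he
    rw [Int.even_iff] at he
    rw [Nat.even_iff]
    omega
  · intro he
    rw [Nat.even_iff] at he
    rw [Int.even_iff]
    omega

lemma ncard_filter_of_nodup {l : List (Sym2 V)} (hl : l.Nodup) (p : Sym2 V → Prop) :
    {e | e ∈ l ∧ p e}.ncard = (l.filter fun e => p e).length := by
  classical
  have h : {e | e ∈ l ∧ p e} = ((l.filter fun e => p e).toFinset : Set (Sym2 V)) := by
    ext e
    simp [List.mem_filter]
  rw [h, Set.ncard_coe_finset, List.toFinset_card_of_nodup (hl.filter _)]

lemma walk_incidence_even {a b : V} (p : G.Walk a b) (x : V) :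
    Even (p.edges.filter fun e => x ∈ e).length ↔ ((x = a) ↔ (x = b)) := by
  induction p with
  | nil => simp
  | @cons a c b h q ih =>
    have hne : ¬(x = a ∧ x = c) := by
      rintro ⟨rfl, rfl⟩
      exact h.ne rfl
    rw [Walk.edges_cons]
    by_cases hx : x ∈ s(a, c)
    · have hx' : x = a ∨ x = c := Sym2.mem_iff.mp hx
      rw [List.filter_cons, if_pos (by simpa using hx), List.length_cons, Nat.even_add_one, ih]
      tauto
    · have hx' : ¬(x = a ∨ x = c) := fun hh => hx (Sym2.mem_iff.mpr hh)
      rw [List.filter_cons, if_neg (by simpa using hx), ih]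
      tauto

lemma even_symmDiff_ncard {α : Type*} (A B : Set α) (hA : A.Finite) (hB : B.Finite) :
    Even ((A \ B) ∪ (B \ A)).ncard ↔ (Even A.ncard ↔ Even B.ncard) := by
  have h1 : ((A \ B) ∪ (B \ A)).ncard = (A \ B).ncard + (B \ A).ncard :=
    Set.ncard_union_eq disjoint_sdiff_sdiff hA.diff hB.diff
  have h2 : (A \ B).ncard + (A ∩ B).ncard = A.ncard := by
    rw [← Set.ncard_union_eq Set.disjoint_sdiff_inter hA.diff (hA.inter_of_left _),
      Set.diff_union_inter]
  have h3 : (B \ A).ncard + (B ∩ A).ncard = B.ncard := by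
    rw [← Set.ncard_union_eq Set.disjoint_sdiff_inter hB.diff (hB.inter_of_left _),
      Set.diff_union_inter]
  have h4 : (A ∩ B).ncard = (B ∩ A).ncard := by rw [Set.inter_comm]
  rw [h1]
  rw [Nat.even_iff, Nat.even_iff, Nat.even_iff]
  omega

end Aux
section Aux2

open SimpleGraph

variable {G : SimpleGraph V} {F F' : Set (Sym2 V)} {T : Set V}

lemma length_filter_prop_congr {α : Type*} {l : List α} {f g : α → Bool}
    (h : ∀ a, f a = true ↔ g a = true) :
    (l.filter f).length = (l.filter g).length := by
  congr 1
  apply List.filter_congr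
  intro a _
  exact Bool.eq_iff_iff.mpr (h a)


lemma isJoin_symmDiff_cycle (hF : IsJoin G T F) {a : V} (c : G.Walk a a) (hc : c.IsCycle)
    [Finite (Sym2 V)] :
    IsJoin G T ((F \ {e | e ∈ c.edges}) ∪ ({e | e ∈ c.edges} \ F)) := by
  constructor
  · rintro e (⟨he, -⟩ | ⟨he, -⟩)
    · exact hF.1 he
    · exact c.edges_subset_edgeSet he
  · intro v
    rw [hF.2 v]
    set Ec : Set (Sym2 V) := {e | e ∈ c.edges} with hEc
    have hsets : {e ∈ (F \ Ec) ∪ (Ec \ F) | v ∈ e} =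
        ({e ∈ F | v ∈ e} \ {e ∈ Ec | v ∈ e}) ∪ ({e ∈ Ec | v ∈ e} \ {e ∈ F | v ∈ e}) := by
      ext e
      simp only [Set.mem_setOf_eq, Set.mem_union, Set.mem_diff]
      tauto
    have hEcEven : Even {e ∈ Ec | v ∈ e}.ncard := by
      have hlen : {e | e ∈ c.edges ∧ v ∈ e}.ncard = (c.edges.filter fun e => v ∈ e).length := by
        rw [ncard_filter_of_nodup hc.edges_nodup]
        apply length_filter_prop_congr
        intro a
        simp
      have : {e ∈ Ec | v ∈ e} = {e | e ∈ c.edges ∧ v ∈ e} := rfl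
      rw [this, hlen]
      exact (walk_incidence_even c v).mpr Iff.rfl
    rw [hsets]
    rw [← Nat.not_even_iff_odd, ← Nat.not_even_iff_odd,
      even_symmDiff_ncard _ _ (Set.toFinite _) (Set.toFinite _)]
    have : Even {e ∈ Ec | v ∈ e}.ncard ↔ True := iff_of_true hEcEven trivial
    tauto

lemma min_join_cycle_nonneg [Fintype V] (hF : IsMinJoin G T F) {a : V} (c : G.Walk a a)
    (hc : c.IsCycle) : 0 ≤ walkWeight F c := by
  classical
  set Ec : Set (Sym2 V) := {e | e ∈ c.edges} with hEc
  have hle : F.ncard ≤ (F \ Ec ∪ Ec \ F).ncard := hF.2 _ (isJoin_symmDiff_cycle hF.1 c hc)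
  have h1 : ((F \ Ec) ∪ (Ec \ F)).ncard = (F \ Ec).ncard + (Ec \ F).ncard :=
    Set.ncard_union_eq disjoint_sdiff_sdiff (Set.toFinite _) (Set.toFinite _)
  have h2 : (F \ Ec).ncard + (F ∩ Ec).ncard = F.ncard := by
    rw [← Set.ncard_union_eq Set.disjoint_sdiff_inter (Set.toFinite _) (Set.toFinite _),
      Set.diff_union_inter]
  have h3 : (Ec \ F).ncard = (c.edges.filter fun e => e ∉ F).length := by
    have : Ec \ F = {e | e ∈ c.edges ∧ e ∉ F} := by
      ext e; simp [hEc]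
    rw [this, ncard_filter_of_nodup hc.edges_nodup]
    apply length_filter_prop_congr
    intro a
    simp
  have h4 : (F ∩ Ec).ncard = (c.edges.filter fun e => e ∈ F).length := by
    have : F ∩ Ec = {e | e ∈ c.edges ∧ e ∈ F} := by
      ext e
      simp only [Set.mem_inter_iff, Set.mem_setOf_eq, hEc]
      tauto
    rw [this, ncard_filter_of_nodup hc.edges_nodup]
  unfold walkWeight
  omega

lemma walkWeight_neg_of {a b : V} (p : G.Walk a b)
    (h : ∀ e ∈ p.edges, (e ∈ F ↔ e ∉ F')) :
    walkWeight F p = -walkWeight F' p := by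
  induction p with
  | nil => simp [walkWeight_nil]
  | @cons a c b hadj q ih =>
    have h1 := h s(a, c) (by simp [Walk.edges_cons])
    have h2 : ∀ e ∈ q.edges, (e ∈ F ↔ e ∉ F') := fun e he => h e (by simp [Walk.edges_cons, he])
    rw [walkWeight_cons, walkWeight_cons, ih h2]
    by_cases hm : s(a, c) ∈ F
    · rw [if_pos hm, if_neg (h1.mp hm)]; ring
    · rw [if_neg hm, if_pos (by by_contra hn; exact hm (h1.mpr hn))]; ring

lemma length_eq_one_of_edge_mem {v u : V} (q : G.Walk v u) (hq : q.IsPath)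
    (h : s(u, v) ∈ q.edges) : q.length = 1 := by
  cases q with
  | nil => simp at h
  | @cons _ y _ hadj rest =>
    rw [Walk.edges_cons, List.mem_cons] at h
    rcases h with h | h
    · have hy : y = u := by
        rw [Sym2.eq_iff] at h
        rcases h with ⟨rfl, h2⟩ | ⟨h1, -⟩
        · exact h2.symm
        · exact h1.symm
      subst hy
      have hnil : rest = Walk.nil :=
        (Walk.isPath_iff_eq_nil (p := rest)).mp ((Walk.cons_isPath_iff hadj rest).mp hq).1
      subst hnil
      rfl
    · exfalso
      have hv2 : v ∈ rest.support := Walk.snd_mem_support_of_mem_edges rest h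
      exact ((Walk.cons_isPath_iff hadj rest).mp hq).2 hv2

/-- The key surgery lemma. -/
lemma key_lemma [Fintype V] {X : Set V} {v u x : V}
    (hF : IsMinJoin G T F) (hC : ∀ y ∈ X, 0 ≤ distF G F y v) (hx : x ∈ X)
    (huv : G.Adj u v) (P : G.Walk x u) (hP : P.IsPath) (hw : walkWeight F P ≤ -2) : False := by
  by_cases hv : v ∈ P.support
  · have hsplit := P.take_spec hv
    have h1 : 0 ≤ walkWeight F (P.takeUntil v hv) :=
      le_trans (hC x hx) (distF_le_walkWeight _ (hP.takeUntil hv))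
    have happ : walkWeight F (P.takeUntil v hv) + walkWeight F (P.dropUntil v hv)
        = walkWeight F P := by
      rw [← walkWeight_append, hsplit]
    have h2 : walkWeight F (P.dropUntil v hv) ≤ -2 := by omega
    have hP2path : (P.dropUntil v hv).IsPath := hP.dropUntil hv
    have hnot : s(u, v) ∉ (P.dropUntil v hv).edges := by
      intro hmem
      have hlen := length_eq_one_of_edge_mem _ hP2path hmem
      have := walkWeight_ge (F := F) (P.dropUntil v hv)
      rw [hlen] at this
      omega
    have hcyc : (Walk.cons huv (P.dropUntil v hv)).IsCycle :=
      (Walk.cons_isCycle_iff _ huv).mpr ⟨hP2path, hnot⟩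
    have h3 := min_join_cycle_nonneg hF _ hcyc
    rw [walkWeight_cons] at h3
    by_cases hm : s(u, v) ∈ F
    · rw [if_pos hm] at h3; omega
    · rw [if_neg hm] at h3; omega
  · have hP' : (P.concat huv).IsPath := by
      rw [← Walk.isPath_reverse_iff, Walk.reverse_concat, Walk.cons_isPath_iff]
      refine ⟨hP.reverse, ?_⟩
      rw [Walk.support_reverse, List.mem_reverse]
      exact hv
    have hw' : walkWeight F (P.concat huv) ≤ -1 := by
      rw [walkWeight_concat]
      by_cases hm : s(u, v) ∈ F
      · rw [if_pos hm]; omega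
      · rw [if_neg hm]; omega
    have := le_trans (hC x hx) (distF_le_walkWeight _ hP')
    omega

end Aux2
section Aux3

open SimpleGraph

variable {G : SimpleGraph V}

lemma reachable_of_two_odd [Fintype V] (H : SimpleGraph V) {u w : V}
    (hu : Odd (H.degree u)) (hrest : ∀ x, x ≠ u → x ≠ w → Even (H.degree x)) :
    H.Reachable u w := by
  classical
  by_contra hreach
  set S : Set V := {x | H.Reachable u x} with hS
  have huS : u ∈ S := Reachable.refl u
  have hwS : w ∉ S := fun h => hreach h
  set H' := gRestrict H S with hH'
  haveI : DecidableRel H'.Adj := Classical.decRel _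
  have hdeg : ∀ x, H'.degree x = if x ∈ S then H.degree x else 0 := by
    intro x
    by_cases hx : x ∈ S
    · rw [if_pos hx]
      unfold SimpleGraph.degree
      congr 1
      ext y
      rw [SimpleGraph.mem_neighborFinset, SimpleGraph.mem_neighborFinset, hH']
      constructor
      · rintro ⟨hadj, -, -⟩; exact hadj
      · intro hadj
        exact ⟨hadj, hx, Reachable.trans hx hadj.reachable⟩
    · rw [if_neg hx]
      rw [← Finset.card_empty]
      unfold SimpleGraph.degree
      congr 1
      ext y
      rw [SimpleGraph.mem_neighborFinset, hH']
      simp only [Finset.notMem_empty, iff_false]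
      rintro ⟨-, hxS, -⟩
      exact hx hxS
  haveI : Fintype H'.edgeSet := Fintype.ofFinite _
  have hsum := SimpleGraph.sum_degrees_eq_twice_card_edges H'
  have heven : Even (∑ x, H'.degree x) := ⟨_, by rw [hsum]; ring⟩
  have hsplit : H'.degree u + ∑ x ∈ Finset.univ.erase u, H'.degree x = ∑ x, H'.degree x :=
    Finset.add_sum_erase Finset.univ (fun x => H'.degree x) (Finset.mem_univ u)
  have hevenrest : Even (∑ x ∈ Finset.univ.erase u, H'.degree x) := by
    apply Finset.even_sum
    intro x hx
    rw [hdeg x]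
    by_cases hxS : x ∈ S
    · rw [if_pos hxS]
      exact hrest x (Finset.ne_of_mem_erase hx) (fun h => hwS (h ▸ hxS))
    · rw [if_neg hxS]; exact Even.zero
  have hodd_u : Odd (H'.degree u) := by rw [hdeg u, if_pos huS]; exact hu
  rcases hodd_u with ⟨k, hk⟩
  rcases hevenrest with ⟨m, hm⟩
  rcases heven with ⟨n, hn⟩
  omega

lemma degree_fromEdgeSet [Fintype V] {D : Set (Sym2 V)} (hD : D ⊆ G.edgeSet) (x : V) :
    (SimpleGraph.fromEdgeSet D).degree x = {e ∈ D | x ∈ e}.ncard := by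
  classical
  have hedge : (SimpleGraph.fromEdgeSet D).edgeSet = D := by
    rw [SimpleGraph.edgeSet_fromEdgeSet]
    ext e
    simp only [Set.mem_diff, Set.mem_setOf_eq]
    exact ⟨fun h => h.1, fun h => ⟨h, G.not_isDiag_of_mem_edgeSet (hD h)⟩⟩
  have h2 : {e ∈ D | x ∈ e} = (SimpleGraph.fromEdgeSet D).incidenceSet x := by
    rw [SimpleGraph.incidenceSet, hedge]
  rw [h2, ← SimpleGraph.card_incidenceSet_eq_degree, ← Nat.card_eq_fintype_card,
    ← Nat.card_coe_set_eq]

lemma mem_of_maximal [Fintype V] {F : Set (Sym2 V)} {A B X : Set V}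
    (hX : MaxBipExtreme G F A B X) (hXA : X ⊆ A) {u : V} (huA : u ∈ A)
    (h : ∀ x ∈ X, 0 ≤ distF G F x u) : u ∈ X := by
  have hext : IsExtremeSet G F (X ∪ {u}) := by
    rintro a (ha | ha) b (hb | hb)
    · exact hX.1 a ha b hb
    · rw [Set.mem_singleton_iff] at hb; subst hb; exact h a ha
    · rw [Set.mem_singleton_iff] at ha; subst ha; rw [distF_symm]; exact h b hb
    · rw [Set.mem_singleton_iff] at ha hb; subst ha; subst hb
      rw [distF_self]
  have hsub : X ∪ {u} ⊆ A := Set.union_subset hXA (by simpa using huA)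
  have hXX := hX.2.2 (X ∪ {u}) hext (Or.inl hsub) Set.subset_union_left
  rw [← hXX]
  exact Set.mem_union_right _ rfl

lemma neighbor_mem_of_C [Fintype V] {T A B X : Set V} {F : Set (Sym2 V)} {v u : V}
    (hbip : IsBipartitionOn G Set.univ A B) (hF : IsMinJoin G T F) (hXA : X ⊆ A)
    (hX : MaxBipExtreme G F A B X) (hC : ∀ x ∈ X, 0 ≤ distF G F x v)
    (hvB : v ∈ B) (huv : G.Adj u v) : u ∈ X := by
  have huA : u ∈ A := by
    rcases bip_cases hbip u with h | h
    · exact h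
    · exfalso
      have h2 := adj_A_not_iff hbip huv
      have hunA : u ∉ A := fun hA => Set.disjoint_left.mp hbip.2.1 hA h
      have hvA : v ∈ A := not_not.mp (fun hn => hunA (h2.mpr hn))
      exact Set.disjoint_left.mp hbip.2.1 hvA hvB
  apply mem_of_maximal hX hXA huA
  intro x hx
  by_contra hneg
  push_neg at hneg
  obtain ⟨P, hP, hPw⟩ := distF_witness hneg
  have heven : Even (walkWeight F P) := by
    rw [walkWeight_even_iff, walk_length_parity hbip]
    exact iff_of_true (hXA hx) huA
  have hle : walkWeight F P ≤ -2 := by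
    rcases heven with ⟨k, hk⟩
    omega
  exact key_lemma hF hC hx huv P hP hle

end Aux3
section Main

open SimpleGraph

lemma sym2_exists_other {e : Sym2 V} {v : V} (h : v ∈ e) : ∃ u, e = s(u, v) := by
  obtain ⟨y, hy⟩ := Sym2.mem_iff_exists.mp h
  exact ⟨y, by rw [hy, Sym2.eq_swap]⟩

theorem stmt_4' [Fintype V] (G : SimpleGraph V) (T A B X : Set V) (F : Set (Sym2 V))
    (hGT : IsGraft G T) (hbip : IsBipartitionOn G Set.univ A B)
    (hF : IsMinJoin G T F) (hXA : X ⊆ A) (hX : MaxBipExtreme G F A B X) :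
    ∀ v ∈ Cset G F Set.univ X, v ∈ B ∧ v ∉ T ∧
      ∀ F' : Set (Sym2 V), IsMinJoin G T F' → ∀ e ∈ F', v ∉ e := by
  classical
  intro v hv
  obtain ⟨⟨-, hvX⟩, hvD⟩ := hv
  have hC : ∀ x ∈ X, 0 ≤ distF G F x v := by
    intro x hx
    by_contra hneg
    push_neg at hneg
    exact hvD ⟨Set.mem_univ v, hvX, x, hx, hneg⟩
  have hvB : v ∈ B := by
    rcases bip_cases hbip v with hvA | hvB
    · exact absurd (mem_of_maximal hX hXA hvA hC) hvX
    · exact hvB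
  have hnoF : ∀ e ∈ F, v ∉ e := by
    intro e heF hve
    obtain ⟨u, rfl⟩ := sym2_exists_other hve
    have huv : G.Adj u v := (G.mem_edgeSet).mp (hF.1.1 heF)
    have huX : u ∈ X := neighbor_mem_of_C hbip hF hXA hX hC hvB huv
    have hpath : (Walk.cons huv Walk.nil).IsPath := by simp [huv.ne]
    have hwt : walkWeight F (Walk.cons huv (Walk.nil : G.Walk v v)) = -1 := by
      rw [walkWeight_cons, walkWeight_nil, if_pos heF]; ring
    have hle := le_trans (hC u huX) (distF_le_walkWeight _ hpath)
    rw [hwt] at hle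
    omega
  have hvT : v ∉ T := by
    intro hvT
    have hodd := (hF.1.2 v).mp hvT
    have hempty : {e ∈ F | v ∈ e} = ∅ := by
      ext e
      simp only [Set.mem_setOf_eq, Set.mem_empty_iff_false, iff_false]
      rintro ⟨heF, hve⟩
      exact hnoF e heF hve
    rw [hempty, Set.ncard_empty] at hodd
    simp at hodd
  refine ⟨hvB, hvT, ?_⟩
  intro F' hF' e0 he0 hve0
  obtain ⟨u, rfl⟩ := sym2_exists_other hve0
  have huv : G.Adj u v := (G.mem_edgeSet).mp (hF'.1.1 he0)
  have hvEvenF' : Even {e ∈ F' | v ∈ e}.ncard :=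
    Nat.not_odd_iff_even.mp (fun ho => hvT ((hF'.1.2 v).mpr ho))
  have hI : s(u, v) ∈ {e ∈ F' | v ∈ e} := ⟨he0, by simp⟩
  have h1lt : 1 < {e ∈ F' | v ∈ e}.ncard := by
    have hpos : 0 < {e ∈ F' | v ∈ e}.ncard := (Set.ncard_pos (Set.toFinite _)).mpr ⟨_, hI⟩
    rcases hvEvenF' with ⟨k, hk⟩
    omega
  obtain ⟨e', he'mem, he'ne⟩ := Set.exists_ne_of_one_lt_ncard h1lt s(u, v)
  obtain ⟨he'F, hve'⟩ := he'mem
  obtain ⟨w, rfl⟩ := sym2_exists_other hve'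
  have hwv : G.Adj w v := (G.mem_edgeSet).mp (hF'.1.1 he'F)
  have huw : u ≠ w := by
    intro h
    subst h
    exact he'ne rfl
  have hvne : v ≠ u := huv.ne'
  have hvnw : v ≠ w := hwv.ne'
  have huX : u ∈ X := neighbor_mem_of_C hbip hF hXA hX hC hvB huv
  have hwX : w ∈ X := neighbor_mem_of_C hbip hF hXA hX hC hvB hwv
  set D : Set (Sym2 V) := (F \ F') ∪ (F' \ F) with hD
  have hDsub : D ⊆ G.edgeSet := by
    rintro e (⟨he, -⟩ | ⟨he, -⟩)
    · exact hF.1.1 he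
    · exact hF'.1.1 he
  have hsuvF : s(u, v) ∉ F := fun h => hnoF _ h (by simp)
  have hswvF : s(w, v) ∉ F := fun h => hnoF _ h (by simp)
  have hsuvD : s(u, v) ∈ D := Or.inr ⟨he0, hsuvF⟩
  have hswvD : s(w, v) ∈ D := Or.inr ⟨he'F, hswvF⟩
  set D2 : Set (Sym2 V) := D \ {s(u, v), s(w, v)} with hD2
  have hD2sub : D2 ⊆ G.edgeSet := fun e he => hDsub he.1
  set H := SimpleGraph.fromEdgeSet D2 with hH
  have hDeven : ∀ x : V, Even {e ∈ D | x ∈ e}.ncard := by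
    intro x
    have hsets : {e ∈ D | x ∈ e} =
        ({e ∈ F | x ∈ e} \ {e ∈ F' | x ∈ e}) ∪ ({e ∈ F' | x ∈ e} \ {e ∈ F | x ∈ e}) := by
      ext e
      simp only [hD, Set.mem_setOf_eq, Set.mem_union, Set.mem_diff]
      tauto
    rw [hsets, even_symmDiff_ncard _ _ (Set.toFinite _) (Set.toFinite _)]
    have hoo : Odd {e ∈ F | x ∈ e}.ncard ↔ Odd {e ∈ F' | x ∈ e}.ncard :=
      (hF.1.2 x).symm.trans (hF'.1.2 x)
    rw [← Nat.not_odd_iff_even, ← Nat.not_odd_iff_even]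
    tauto
  have hdegH : ∀ x, H.degree x = {e ∈ D2 | x ∈ e}.ncard := fun x => by convert degree_fromEdgeSet hD2sub x
  have hu1 : u ∉ s(w, v) := by
    rw [Sym2.mem_iff]
    rintro (h | h)
    · exact huw h
    · exact hvne h.symm
  have hw1 : w ∉ s(u, v) := by
    rw [Sym2.mem_iff]
    rintro (h | h)
    · exact huw h.symm
    · exact hvnw h.symm
  have hOddu : Odd (H.degree u) := by
    rw [hdegH]
    have hset : {e ∈ D2 | u ∈ e} = {e ∈ D | u ∈ e} \ {s(u, v)} := by
      ext e
      simp only [hD2, Set.mem_setOf_eq, Set.mem_diff, Set.mem_insert_iff, Set.mem_singleton_iff]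
      constructor
      · rintro ⟨⟨heD, hne2⟩, hue⟩
        exact ⟨⟨heD, hue⟩, fun h => hne2 (Or.inl h)⟩
      · rintro ⟨⟨heD, hue⟩, hne⟩
        refine ⟨⟨heD, ?_⟩, hue⟩
        rintro (rfl | rfl)
        · exact hne rfl
        · exact hu1 hue
    rw [hset]
    have hmem : s(u, v) ∈ {e ∈ D | u ∈ e} := ⟨hsuvD, by simp⟩
    rw [Set.ncard_diff_singleton_of_mem hmem]
    have hpos : 0 < {e ∈ D | u ∈ e}.ncard := (Set.ncard_pos (Set.toFinite _)).mpr ⟨_, hmem⟩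
    rcases hDeven u with ⟨k, hk⟩
    rw [Nat.odd_iff]
    omega
  have hOddw : Odd (H.degree w) := by
    rw [hdegH]
    have hset : {e ∈ D2 | w ∈ e} = {e ∈ D | w ∈ e} \ {s(w, v)} := by
      ext e
      simp only [hD2, Set.mem_setOf_eq, Set.mem_diff, Set.mem_insert_iff, Set.mem_singleton_iff]
      constructor
      · rintro ⟨⟨heD, hne2⟩, hwe⟩
        exact ⟨⟨heD, hwe⟩, fun h => hne2 (Or.inr h)⟩
      · rintro ⟨⟨heD, hwe⟩, hne⟩
        refine ⟨⟨heD, ?_⟩, hwe⟩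
        rintro (rfl | rfl)
        · exact hw1 hwe
        · exact hne rfl
    rw [hset]
    have hmem : s(w, v) ∈ {e ∈ D | w ∈ e} := ⟨hswvD, by simp⟩
    rw [Set.ncard_diff_singleton_of_mem hmem]
    have hpos : 0 < {e ∈ D | w ∈ e}.ncard := (Set.ncard_pos (Set.toFinite _)).mpr ⟨_, hmem⟩
    rcases hDeven w with ⟨k, hk⟩
    rw [Nat.odd_iff]
    omega
  have hEvenrest : ∀ x, x ≠ u → x ≠ w → Even (H.degree x) := by
    intro x hxu hxw
    rw [hdegH]
    by_cases hxv : x = v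
    · subst hxv
      have hset : {e ∈ D2 | x ∈ e} = ({e ∈ D | x ∈ e} \ {s(u, x)}) \ {s(w, x)} := by
        ext e
        simp only [hD2, Set.mem_setOf_eq, Set.mem_diff, Set.mem_insert_iff, Set.mem_singleton_iff]
        constructor
        · rintro ⟨⟨heD, hne2⟩, hxe⟩
          exact ⟨⟨⟨heD, hxe⟩, fun h => hne2 (Or.inl h)⟩, fun h => hne2 (Or.inr h)⟩
        · rintro ⟨⟨⟨heD, hxe⟩, h1⟩, h2⟩
          refine ⟨⟨heD, ?_⟩, hxe⟩
          rintro (rfl | rfl)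
          · exact h1 rfl
          · exact h2 rfl
      have hm1 : s(u, x) ∈ {e ∈ D | x ∈ e} := ⟨hsuvD, by simp⟩
      have hm2 : s(w, x) ∈ {e ∈ D | x ∈ e} \ {s(u, x)} :=
        ⟨⟨hswvD, by simp⟩, by simpa using he'ne⟩
      have h2lt : 1 < {e ∈ D | x ∈ e}.ncard :=
        (Set.one_lt_ncard_iff (Set.toFinite _)).mpr ⟨s(w, x), s(u, x), ⟨hswvD, by simp⟩, hm1, he'ne⟩
      rw [hset, Set.ncard_diff_singleton_of_mem hm2,
        Set.ncard_diff_singleton_of_mem hm1]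
      rcases hDeven x with ⟨k, hk⟩
      rw [Nat.even_iff]
      omega
    · have hset : {e ∈ D2 | x ∈ e} = {e ∈ D | x ∈ e} := by
        ext e
        simp only [hD2, Set.mem_setOf_eq, Set.mem_diff, Set.mem_insert_iff, Set.mem_singleton_iff]
        constructor
        · rintro ⟨⟨heD, -⟩, hxe⟩
          exact ⟨heD, hxe⟩
        · rintro ⟨heD, hxe⟩
          refine ⟨⟨heD, ?_⟩, hxe⟩
          rintro (rfl | rfl)
          · rcases Sym2.mem_iff.mp hxe with h | h
            · exact hxu h
            · exact hxv h
          · rcases Sym2.mem_iff.mp hxe with h | h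
            · exact hxw h
            · exact hxv h
      rw [hset]
      exact hDeven x
  have hreach : H.Reachable u w := reachable_of_two_odd H (by convert hOddu)
    (fun x h1 h2 => by convert hEvenrest x h1 h2)
  obtain ⟨p0⟩ := hreach
  set Q0 := p0.toPath with hQ0
  have hQ0path : (Q0 : H.Walk u w).IsPath := Q0.2
  have hQ0edges : ∀ e ∈ (Q0 : H.Walk u w).edges, e ∈ D2 := by
    intro e he
    have h1 := Walk.edges_subset_edgeSet _ he
    rw [hH, SimpleGraph.edgeSet_fromEdgeSet] at h1
    exact h1.1
  set Q : G.Walk u w := (Q0 : H.Walk u w).transfer G (fun e he => hD2sub (hQ0edges e he)) with hQ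
  have hQpath : Q.IsPath := hQ0path.transfer _
  have hQedges : ∀ e ∈ Q.edges, e ∈ D2 := by
    intro e he
    rw [hQ, Walk.edges_transfer] at he
    exact hQ0edges e he
  have hDiff : ∀ e ∈ D, (e ∈ F ↔ e ∉ F') := by
    rintro e (⟨h1, h2⟩ | ⟨h1, h2⟩)
    · exact iff_of_true h1 h2
    · exact iff_of_false h2 (fun hn => hn h1)
  by_cases hvQ : v ∈ Q.support
  · set Q1 := Q.takeUntil v hvQ with hQ1
    have hQ1path : Q1.IsPath := hQpath.takeUntil hvQ
    have hQ1edges : ∀ e ∈ Q1.edges, e ∈ D2 := by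
      intro e he
      exact hQedges e (Walk.edges_takeUntil_subset Q hvQ he)
    have hnotedge : s(u, v) ∉ Q1.reverse.edges := by
      rw [Walk.edges_reverse, List.mem_reverse]
      intro hmem
      exact (hQ1edges _ hmem).2 (Or.inl rfl)
    have hcedges : ∀ e ∈ (Walk.cons huv Q1.reverse).edges, e ∈ D := by
      intro e he
      rw [Walk.edges_cons, List.mem_cons] at he
      rcases he with rfl | he
      · exact hsuvD
      · rw [Walk.edges_reverse, List.mem_reverse] at he
        exact (hQ1edges e he).1
    have hcyc : (Walk.cons huv Q1.reverse).IsCycle :=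
      (Walk.cons_isCycle_iff Q1.reverse huv).mpr ⟨hQ1path.reverse, hnotedge⟩
    have hneg := walkWeight_neg_of (F := F) (F' := F') _ (fun e he => hDiff e (hcedges e he))
    have h1 := min_join_cycle_nonneg hF _ hcyc
    have h2 := min_join_cycle_nonneg hF' _ hcyc
    have hcw : walkWeight F (Walk.cons huv Q1.reverse) = 1 + walkWeight F Q1 := by
      rw [walkWeight_cons, if_neg hsuvF, walkWeight_reverse]
    have hdist := le_trans (hC u huX) (distF_le_walkWeight Q1 hQ1path)
    omega
  · have hP2path : (Q.concat hwv).IsPath := by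
      rw [← Walk.isPath_reverse_iff, Walk.reverse_concat, Walk.cons_isPath_iff]
      exact ⟨hQpath.reverse, by rw [Walk.support_reverse, List.mem_reverse]; exact hvQ⟩
    have hnotedge : s(v, u) ∉ (Q.concat hwv).edges := by
      rw [Walk.edges_concat, List.concat_eq_append, List.mem_append]
      rintro (h | h)
      · exact (hQedges _ h).2 (Or.inl Sym2.eq_swap)
      · rw [List.mem_singleton] at h
        rcases Sym2.eq_iff.mp h with ⟨h1, -⟩ | ⟨-, h2⟩
        · exact hvnw h1
        · exact huw h2
    have hcedges : ∀ e ∈ (Walk.cons huv.symm (Q.concat hwv)).edges, e ∈ D := by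
      intro e he
      rw [Walk.edges_cons, List.mem_cons] at he
      rcases he with rfl | he
      · rw [Sym2.eq_swap]
        exact hsuvD
      · rw [Walk.edges_concat, List.concat_eq_append, List.mem_append] at he
        rcases he with he | he
        · exact (hQedges e he).1
        · rw [List.mem_singleton] at he
          subst he
          exact hswvD
    have hcyc : (Walk.cons huv.symm (Q.concat hwv)).IsCycle :=
      (Walk.cons_isCycle_iff (Q.concat hwv) huv.symm).mpr ⟨hP2path, hnotedge⟩
    have hneg := walkWeight_neg_of (F := F) (F' := F') _ (fun e he => hDiff e (hcedges e he))
    have h1 := min_join_cycle_nonneg hF _ hcyc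
    have h2 := min_join_cycle_nonneg hF' _ hcyc
    have hsvuF : s(v, u) ∉ F := by
      rw [Sym2.eq_swap]
      exact hsuvF
    have hcw : walkWeight F (Walk.cons huv.symm (Q.concat hwv)) =
        1 + (walkWeight F Q + 1) := by
      rw [walkWeight_cons, if_neg hsvuF, walkWeight_concat, if_neg hswvF]
    have hdist := le_trans (hX.1 u huX w hwX) (distF_le_walkWeight Q hQpath)
    omega

end Main
/-- For a maximal bipartitic extreme set `X ⊆ A` of a bipartite graft,
every vertex of `C_X` is a trivial vertex from `B`: it lies in `B`, is not in `T`,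
and is incident with no edge of any minimum join. -/
theorem stmt_4 [Fintype V] (G : SimpleGraph V) (T A B X : Set V) (F : Set (Sym2 V))
    (hGT : IsGraft G T) (hbip : IsBipartitionOn G Set.univ A B)
    (hF : IsMinJoin G T F) (hXA : X ⊆ A) (hX : MaxBipExtreme G F A B X) :
    ∀ v ∈ Cset G F Set.univ X, v ∈ B ∧ v ∉ T ∧
      ∀ F' : Set (Sym2 V), IsMinJoin G T F' → ∀ e ∈ F', v ∉ e := by
  exact stmt_4' G T A B X F hGT hbip hF hXA hX
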